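/- Let n ≥ 1 be an integer, s ∈ (0,1), and let Ω ⊂ ℝⁿ be a nonempty bounded open set whose boundary ∂Ω has Lebesgue measure zero. Let u : ℝⁿ → ℝ be measurable with u|_Ω ∈ L¹(Ω), let ũ be the function equal to u on the closure of Ω and equal to E_u/E_1 on ℝⁿ\Ω̄, and assume moreover that ∬_Q |u(x)−u(y)|²/|x−y|^{n+2s} dx dy < ∞. Then ∬_Q |ũ(x)−ũ(y)|²/|x−y|^{n+2s} dx dy = ∬_Q |u(x)−u(y)|²/|x−y|^{n+2s} dx dy holds if and only if u(x) = E_u(x)/E_1(x) for a.e. x ∈ ℝⁿ\Ω̄, i.e. if and only if u satisfies the nonlocal Neumann condition 𝒩ₛu(x) = 0 for a.e. x ∈ ℝⁿ\Ω̄. -/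

import Mathlib

open MeasureTheory Set
open scoped ENNReal

noncomputable section

abbrev Rn (n : ℕ) : Type := EuclideanSpace ℝ (Fin n)

/-- The cross-shaped region `Q := ℝ²ⁿ \ ((ℝⁿ\Ω)×(ℝⁿ\Ω))`. -/
def QQ {n : ℕ} (Ω : Set (Rn n)) : Set (Rn n × Rn n) := ((Ωᶜ) ×ˢ (Ωᶜ))ᶜ

/-- The Gagliardo-type energy `∬_Q |u(x)-u(y)|²/|x-y|^{n+2s} dx dy`, valued in `[0,∞]`. -/
def gagEnergy (n : ℕ) (s : ℝ) (Ω : Set (Rn n)) (u : Rn n → ℝ) : ℝ≥0∞ :=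
  ∫⁻ p in QQ Ω, ENNReal.ofReal (|u p.1 - u p.2| ^ 2 / ‖p.1 - p.2‖ ^ ((n : ℝ) + 2 * s))

/-- `E_u(x) := ∫_Ω u(z)/|x-z|^{n+2s} dz`. -/
def Efun (n : ℕ) (s : ℝ) (Ω : Set (Rn n)) (u : Rn n → ℝ) (x : Rn n) : ℝ :=
  ∫ z in Ω, u z / ‖x - z‖ ^ ((n : ℝ) + 2 * s)

open Classical in
/-- `ũ`, equal to `u` on the closure of `Ω` and to `E_u/E_1` outside. -/
def tildeFun (n : ℕ) (s : ℝ) (Ω : Set (Rn n)) (u : Rn n → ℝ) (x : Rn n) : ℝ :=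
  if x ∈ closure Ω then u x
  else Efun n s Ω u x / Efun n s Ω (fun _ => 1) x

lemma contKer {n : ℕ} {p : ℝ} (hp : 0 ≤ p) :
    Continuous fun q : Rn n × Rn n => ‖q.1 - q.2‖ ^ p :=
  ((continuous_fst.sub continuous_snd).norm).rpow_const (fun _ => Or.inr hp)

lemma measKer2 {n : ℕ} {p : ℝ} (hp : 0 ≤ p) {v w : Rn n → ℝ} (hv : Measurable v) (hw : Measurable w) :
    Measurable fun q : Rn n × Rn n => ENNReal.ofReal (|v q.2 - w q.1| ^ 2 / ‖q.2 - q.1‖ ^ p) := by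
  apply ENNReal.measurable_ofReal.comp
  refine Measurable.div ?_ ?_
  · exact (((hv.comp measurable_snd).sub (hw.comp measurable_fst)).abs).pow_const 2
  · exact (((continuous_snd.sub continuous_fst).norm).rpow_const (fun _ => Or.inr hp)).measurable

lemma measKer {n : ℕ} {p : ℝ} (hp : 0 ≤ p) {v w : Rn n → ℝ} (hv : Measurable v) (hw : Measurable w) :
    Measurable fun q : Rn n × Rn n => ENNReal.ofReal (|v q.1 - w q.2| ^ 2 / ‖q.1 - q.2‖ ^ p) := by
  apply ENNReal.measurable_ofReal.comp
  exact ((((hv.comp measurable_fst).sub (hw.comp measurable_snd)).abs).pow_const 2).div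
    (contKer hp).measurable

lemma measEfun {n : ℕ} (s : ℝ) (hs : 0 ≤ s) (Ω : Set (Rn n)) {w : Rn n → ℝ} (hw : Measurable w) :
    Measurable (Efun n s Ω w) := by
  have hp : (0:ℝ) ≤ (n : ℝ) + 2 * s := by positivity
  have h : StronglyMeasurable fun q : Rn n × Rn n => w q.2 / ‖q.1 - q.2‖ ^ ((n : ℝ) + 2 * s) :=
    ((hw.comp measurable_snd).div (contKer hp).measurable).stronglyMeasurable
  exact h.integral_prod_right'.measurable

/-- the one-variable cross energy with constant value `c` at the outside point `x` -/
def Jc (n : ℕ) (s : ℝ) (Ω : Set (Rn n)) (u : Rn n → ℝ) (c : ℝ) (x : Rn n) : ℝ≥0∞ :=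
  ∫⁻ y in Ω, ENNReal.ofReal (|c - u y| ^ 2 / ‖x - y‖ ^ ((n : ℝ) + 2 * s))

lemma splitEnergy {n : ℕ} {s : ℝ} (hs : 0 ≤ s) {Ω : Set (Rn n)} (hΩo : IsOpen Ω)
    (hfr : volume (frontier Ω) = 0)
    {u v : Rn n → ℝ} (hu : Measurable u) (hv : Measurable v)
    (hvu : ∀ y ∈ Ω, v y = u y) :
    gagEnergy n s Ω v
      = (∫⁻ q in Ω ×ˢ Ω, ENNReal.ofReal (|u q.1 - u q.2| ^ 2 / ‖q.1 - q.2‖ ^ ((n:ℝ) + 2*s)))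
        + 2 * ∫⁻ x in (closure Ω)ᶜ, Jc n s Ω u (v x) x := by
  have hp : (0:ℝ) ≤ (n : ℝ) + 2 * s := by positivity
  have hΩm : MeasurableSet Ω := hΩo.measurableSet
  -- set decomposition
  have hQ : QQ Ω = (Ω ×ˢ Ω) ∪ ((Ω ×ˢ Ωᶜ) ∪ (Ωᶜ ×ˢ Ω)) := by
    ext ⟨x, y⟩
    simp only [QQ, mem_compl_iff, mem_prod, not_and_or, not_not, mem_union]
    tauto
  have hd1 : Disjoint (Ω ×ˢ Ω) ((Ω ×ˢ Ωᶜ) ∪ (Ωᶜ ×ˢ Ω)) := by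
    rw [Set.disjoint_left]
    rintro ⟨x, y⟩ ⟨hx, hy⟩ h
    simp only [mem_union, mem_prod, mem_compl_iff] at h
    tauto
  have hd2 : Disjoint (Ω ×ˢ Ωᶜ) (Ωᶜ ×ˢ Ω) := by
    rw [Set.disjoint_left]
    rintro ⟨x, y⟩ ⟨hx, hy⟩ h
    simp only [mem_prod, mem_compl_iff] at h
    tauto
  have hm2 : MeasurableSet ((Ω ×ˢ Ωᶜ) ∪ (Ωᶜ ×ˢ Ω)) :=
    (hΩm.prod hΩm.compl).union (hΩm.compl.prod hΩm)
  rw [gagEnergy, hQ, lintegral_union hm2 hd1, lintegral_union (hΩm.compl.prod hΩm) hd2]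
  -- the Ω×Ω term
  have hT1 : (∫⁻ q in Ω ×ˢ Ω, ENNReal.ofReal (|v q.1 - v q.2| ^ 2 / ‖q.1 - q.2‖ ^ ((n:ℝ) + 2*s)))
      = ∫⁻ q in Ω ×ˢ Ω, ENNReal.ofReal (|u q.1 - u q.2| ^ 2 / ‖q.1 - q.2‖ ^ ((n:ℝ) + 2*s)) := by
    refine setLIntegral_congr_fun (hΩm.prod hΩm) ?_
    rintro ⟨x, y⟩ ⟨hx, hy⟩
    simp only [hvu x hx, hvu y hy]
  -- restrict congruence : Ωᶜ =ᵐ (closure Ω)ᶜ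
  have hsetae : (Ωᶜ : Set (Rn n)) =ᵐ[volume] (closure Ω)ᶜ := by
    refine MeasureTheory.ae_eq_set.mpr ⟨?_, ?_⟩
    · refine measure_mono_null ?_ hfr
      intro x hx
      rw [frontier, hΩo.interior_eq]
      exact ⟨notMem_compl_iff.mp hx.2, hx.1⟩
    · have he : (closure Ω)ᶜ \ Ωᶜ = ∅ := by
        ext x
        simp only [mem_diff, mem_compl_iff, not_not, mem_empty_iff_false, iff_false, not_and]
        exact fun h hx => h (subset_closure hx)
      exact (congrArg (fun t => volume t) he).trans measure_empty
  have hrc : (volume : Measure (Rn n)).restrict Ωᶜ = volume.restrict (closure Ω)ᶜ :=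
    Measure.restrict_congr_set hsetae
  -- T2 : the Ω × Ωᶜ term
  have hT2 : (∫⁻ q in Ω ×ˢ Ωᶜ, ENNReal.ofReal (|v q.1 - v q.2| ^ 2 / ‖q.1 - q.2‖ ^ ((n:ℝ) + 2*s)))
      = ∫⁻ x in (closure Ω)ᶜ, Jc n s Ω u (v x) x := by
    have hcongr : (∫⁻ q in Ω ×ˢ Ωᶜ, ENNReal.ofReal (|v q.1 - v q.2| ^ 2 / ‖q.1 - q.2‖ ^ ((n:ℝ) + 2*s)))
        = ∫⁻ q in Ω ×ˢ Ωᶜ, ENNReal.ofReal (|v q.2 - u q.1| ^ 2 / ‖q.2 - q.1‖ ^ ((n:ℝ) + 2*s)) := by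
      refine setLIntegral_congr_fun (hΩm.prod hΩm.compl) ?_
      rintro ⟨x, y⟩ ⟨hx, _⟩
      simp only [hvu x hx, abs_sub_comm (u x) (v y), norm_sub_rev x y]
    rw [hcongr, Measure.volume_eq_prod, ← Measure.prod_restrict,
      lintegral_prod_symm _ (measKer2 hp hv hu).aemeasurable, hrc]
    rfl
  -- T3 : the Ωᶜ × Ω term
  have hT3 : (∫⁻ q in Ωᶜ ×ˢ Ω, ENNReal.ofReal (|v q.1 - v q.2| ^ 2 / ‖q.1 - q.2‖ ^ ((n:ℝ) + 2*s)))
      = ∫⁻ x in (closure Ω)ᶜ, Jc n s Ω u (v x) x := by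
    have hcongr : (∫⁻ q in Ωᶜ ×ˢ Ω, ENNReal.ofReal (|v q.1 - v q.2| ^ 2 / ‖q.1 - q.2‖ ^ ((n:ℝ) + 2*s)))
        = ∫⁻ q in Ωᶜ ×ˢ Ω, ENNReal.ofReal (|v q.1 - u q.2| ^ 2 / ‖q.1 - q.2‖ ^ ((n:ℝ) + 2*s)) := by
      refine setLIntegral_congr_fun (hΩm.compl.prod hΩm) ?_
      rintro ⟨x, y⟩ ⟨_, hy⟩
      simp only [hvu y hy]
    rw [hcongr, Measure.volume_eq_prod, ← Measure.prod_restrict,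
      lintegral_prod _ (measKer hp hv hu).aemeasurable, hrc]
    rfl
  rw [hT1, hT2, hT3, two_mul (∫⁻ x in (closure Ω)ᶜ, Jc n s Ω u (v x) x)]

lemma keyId {n : ℕ} {s : ℝ} (hs0 : 0 < s) {Ω : Set (Rn n)} (hΩne : Ω.Nonempty) (hΩo : IsOpen Ω)
    (hΩb : Bornology.IsBounded Ω) {u : Rn n → ℝ} (hu : Measurable u)
    (hui : IntegrableOn u Ω) (hL2 : IntegrableOn (fun y => u y ^ 2) Ω)
    {x : Rn n} (hx : x ∉ closure Ω) (c : ℝ) :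
    0 < Efun n s Ω (fun _ => 1) x ∧
    Jc n s Ω u c x
      = ENNReal.ofReal ((c - Efun n s Ω u x / Efun n s Ω (fun _ => 1) x) ^ 2
          * Efun n s Ω (fun _ => 1) x)
        + Jc n s Ω u (Efun n s Ω u x / Efun n s Ω (fun _ => 1) x) x := by
  have hp : (0:ℝ) < (n : ℝ) + 2 * s := by positivity
  set p : ℝ := (n:ℝ) + 2 * s with hpdef
  have hΩm : MeasurableSet Ω := hΩo.measurableSet
  have hΩfin : volume Ω < ⊤ := hΩb.measure_lt_top
  set d := Metric.infDist x Ω with hddef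
  have hd : 0 < d := by
    rcases (Metric.infDist_nonneg (s := Ω) (x := x)).lt_or_eq with h | h
    · exact h
    · exact absurd ((Metric.mem_closure_iff_infDist_zero hΩne).mpr h.symm) hx
  obtain ⟨r, hr⟩ := hΩb.subset_closedBall 0
  set R : ℝ := ‖x‖ + r with hRdef
  have hub : ∀ y ∈ Ω, ‖x - y‖ ≤ R := by
    intro y hy
    have h1 : ‖y‖ ≤ r := by simpa [dist_eq_norm] using hr hy
    calc ‖x - y‖ ≤ ‖x‖ + ‖y‖ := norm_sub_le _ _
      _ ≤ R := by rw [hRdef]; exact add_le_add_right h1 _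
  have hlb : ∀ y ∈ Ω, d ≤ ‖x - y‖ := by
    intro y hy
    simpa [dist_eq_norm] using Metric.infDist_le_dist_of_mem hy
  have hR : 0 < R := by
    obtain ⟨y0, hy0⟩ := hΩne
    exact lt_of_lt_of_le hd (le_trans (hlb y0 hy0) (hub y0 hy0))
  have hKpos : ∀ y ∈ Ω, 0 < ‖x - y‖ ^ p := fun y hy =>
    Real.rpow_pos_of_pos (lt_of_lt_of_le hd (hlb y hy)) p
  have hKlb : ∀ y ∈ Ω, d ^ p ≤ ‖x - y‖ ^ p := fun y hy =>
    Real.rpow_le_rpow hd.le (hlb y hy) hp.le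
  have hKub : ∀ y ∈ Ω, ‖x - y‖ ^ p ≤ R ^ p := fun y hy =>
    Real.rpow_le_rpow (norm_nonneg _) (hub y hy) hp.le
  have measK : Measurable fun y : Rn n => ‖x - y‖ ^ p :=
    (((continuous_const.sub continuous_id).norm).rpow_const (fun _ => Or.inr hp.le)).measurable
  -- integrability machine
  have intK : ∀ g : Rn n → ℝ, Measurable g → IntegrableOn g Ω volume →
      IntegrableOn (fun y => g y / ‖x - y‖ ^ p) Ω volume := by
    intro g hg hgi
    refine Integrable.mono' (hgi.abs.mul_const ((d ^ p)⁻¹)) ((hg.div measK).aestronglyMeasurable) ?_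
    filter_upwards [ae_restrict_mem hΩm] with y hy
    have h2 : 0 < d ^ p := Real.rpow_pos_of_pos hd p
    rw [Real.norm_eq_abs, abs_div, abs_of_pos (hKpos y hy), ← div_eq_mul_inv]
    exact div_le_div_of_nonneg_left (abs_nonneg _) h2 (hKlb y hy)
  have intc2 : ∀ a : ℝ, IntegrableOn (fun y => (a - u y) ^ 2) Ω volume := by
    intro a
    have hbd : IntegrableOn (fun y => 2 * a ^ 2 + 2 * u y ^ 2) Ω volume :=
      (integrableOn_const hΩfin.ne).add (hL2.const_mul 2)
    refine Integrable.mono' hbd (((measurable_const.sub hu).pow_const 2).aestronglyMeasurable) ?_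
    filter_upwards with y
    rw [Real.norm_eq_abs, abs_of_nonneg (sq_nonneg _)]
    nlinarith [sq_nonneg (a + u y)]
  have intKc : ∀ a : ℝ, IntegrableOn (fun y => (a - u y) ^ 2 / ‖x - y‖ ^ p) Ω volume :=
    fun a => intK _ ((measurable_const.sub hu).pow_const 2) (intc2 a)
  have intK1 : IntegrableOn (fun y => 1 / ‖x - y‖ ^ p) Ω volume :=
    intK _ measurable_const (integrableOn_const hΩfin.ne)
  have intKu : IntegrableOn (fun y => u y / ‖x - y‖ ^ p) Ω volume := intK _ hu hui
  have intKu2 : IntegrableOn (fun y => u y ^ 2 / ‖x - y‖ ^ p) Ω volume :=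
    intK _ (hu.pow_const 2) hL2
  -- E1 positivity
  have hE1eq : Efun n s Ω (fun _ => 1) x = ∫ y in Ω, 1 / ‖x - y‖ ^ p := rfl
  have hEueq : Efun n s Ω u x = ∫ y in Ω, u y / ‖x - y‖ ^ p := rfl
  have hE1pos : 0 < Efun n s Ω (fun _ => 1) x := by
    have hmono : ∫ y in Ω, (R ^ p)⁻¹ ∂volume ≤ ∫ y in Ω, 1 / ‖x - y‖ ^ p ∂volume := by
      refine setIntegral_mono_on (integrableOn_const hΩfin.ne) intK1 hΩm ?_
      intro y hy
      rw [inv_eq_one_div]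
      exact div_le_div_of_nonneg_left zero_le_one (hKpos y hy) (hKub y hy)
    have hconst : ∫ y in Ω, (R ^ p)⁻¹ ∂volume = (volume Ω).toReal * (R ^ p)⁻¹ := by
      rw [setIntegral_const, smul_eq_mul, measureReal_def]
    have hvol : 0 < (volume Ω).toReal :=
      ENNReal.toReal_pos (hΩo.measure_pos volume hΩne).ne' hΩfin.ne
    have hpos : 0 < (volume Ω).toReal * (R ^ p)⁻¹ :=
      mul_pos hvol (inv_pos.mpr (Real.rpow_pos_of_pos hR p))
    rw [hE1eq]
    exact lt_of_lt_of_le (hconst ▸ hpos) hmono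
  refine ⟨hE1pos, ?_⟩
  -- expansion of the quadratic
  have expand : ∀ a : ℝ, (∫ y in Ω, (a - u y) ^ 2 / ‖x - y‖ ^ p)
      = a ^ 2 * Efun n s Ω (fun _ => 1) x - 2 * a * Efun n s Ω u x
        + ∫ y in Ω, u y ^ 2 / ‖x - y‖ ^ p := by
    intro a
    have h1 : ∀ y : Rn n, (a - u y) ^ 2 / ‖x - y‖ ^ p
        = a ^ 2 * (1 / ‖x - y‖ ^ p) - 2 * a * (u y / ‖x - y‖ ^ p) + u y ^ 2 / ‖x - y‖ ^ p := by
      intro y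
      rw [sub_sq, add_div, sub_div]
      ring
    have i1 : IntegrableOn (fun y => a ^ 2 * (1 / ‖x - y‖ ^ p)) Ω volume := intK1.const_mul _
    have i2 : IntegrableOn (fun y => 2 * a * (u y / ‖x - y‖ ^ p)) Ω volume := intKu.const_mul _
    have i12 : IntegrableOn
        (fun y => a ^ 2 * (1 / ‖x - y‖ ^ p) - 2 * a * (u y / ‖x - y‖ ^ p)) Ω volume := i1.sub i2
    simp only [h1]
    rw [integral_add i12 intKu2, integral_sub i1 i2, integral_const_mul, integral_const_mul,
      hE1eq, hEueq]
  -- conversion lintegral ↔ integral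
  have conv : ∀ a : ℝ, Jc n s Ω u a x
      = ENNReal.ofReal (∫ y in Ω, (a - u y) ^ 2 / ‖x - y‖ ^ p) := by
    intro a
    have hnn : 0 ≤ᵐ[volume.restrict Ω] fun y => (a - u y) ^ 2 / ‖x - y‖ ^ p := by
      filter_upwards with y
      positivity
    rw [Jc]
    simp only [sq_abs]
    exact (ofReal_integral_eq_lintegral_ofReal (intKc a) hnn).symm
  have hWm : 0 ≤ (Efun n s Ω u x / Efun n s Ω (fun _ => 1) x) ^ 2 * Efun n s Ω (fun _ => 1) x
      - 2 * (Efun n s Ω u x / Efun n s Ω (fun _ => 1) x) * Efun n s Ω u x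
      + ∫ y in Ω, u y ^ 2 / ‖x - y‖ ^ p := by
    rw [← expand (Efun n s Ω u x / Efun n s Ω (fun _ => 1) x)]
    exact integral_nonneg fun y => by positivity
  rw [conv c, conv (Efun n s Ω u x / Efun n s Ω (fun _ => 1) x), expand c,
    expand (Efun n s Ω u x / Efun n s Ω (fun _ => 1) x),
    ← ENNReal.ofReal_add (mul_nonneg (sq_nonneg _) hE1pos.le) hWm]
  congr 1
  field_simp
  ring


/-- equality of the Gagliardo energies of `u` and `ũ` holds if and only if
`u = E_u/E_1` a.e. outside the closure of `Ω`, i.e. iff `u` satisfies the nonlocal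
Neumann condition `𝒩ₛu = 0` a.e. in `ℝⁿ \ Ω̄`. -/
theorem statement1 {n : ℕ} (hn : 1 ≤ n) {s : ℝ} (hs0 : 0 < s) (hs1 : s < 1)
    {Ω : Set (Rn n)} (hΩne : Ω.Nonempty) (hΩo : IsOpen Ω)
    (hΩb : Bornology.IsBounded Ω) (hfr : volume (frontier Ω) = 0)
    {u : Rn n → ℝ} (hu : Measurable u) (hui : IntegrableOn u Ω)
    (hfin : gagEnergy n s Ω u ≠ ∞) :
    gagEnergy n s Ω (tildeFun n s Ω u) = gagEnergy n s Ω u ↔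
      ∀ᵐ x ∂volume.restrict (closure Ω)ᶜ,
        u x = Efun n s Ω u x / Efun n s Ω (fun _ => 1) x := by
  have hs : (0:ℝ) ≤ s := hs0.le
  have hp : (0:ℝ) ≤ (n:ℝ) + 2 * s := by positivity
  have hpp : (0:ℝ) < (n:ℝ) + 2 * s := by positivity
  have hΩm : MeasurableSet Ω := hΩo.measurableSet
  have hC : MeasurableSet ((closure Ω)ᶜ) := isClosed_closure.measurableSet.compl
  have hΩfin : volume Ω < ⊤ := hΩb.measure_lt_top
  have hE1m : Measurable (Efun n s Ω (fun _ => 1)) := measEfun s hs Ω measurable_const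
  have hEum : Measurable (Efun n s Ω u) := measEfun s hs Ω hu
  have hutm : Measurable (tildeFun n s Ω u) :=
    Measurable.ite isClosed_closure.measurableSet hu (hEum.div hE1m)
  have hutΩ : ∀ y ∈ Ω, tildeFun n s Ω u y = u y := fun y hy => if_pos (subset_closure hy)
  -- split energies
  have splitU := splitEnergy hs hΩo hfr hu hu (fun _ _ => rfl)
  have splitT := splitEnergy hs hΩo hfr hu hutm hutΩ
  -- measurability of the pieces
  have measJu : Measurable fun x => Jc n s Ω u (u x) x :=
    Measurable.lintegral_prod_right' (measKer hp hu hu)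
  have measJt : Measurable fun x => Jc n s Ω u (tildeFun n s Ω u x) x :=
    Measurable.lintegral_prod_right' (measKer hp hutm hu)
  have measδ : Measurable fun x => ENNReal.ofReal
      ((u x - Efun n s Ω u x / Efun n s Ω (fun _ => 1) x) ^ 2 * Efun n s Ω (fun _ => 1) x) :=
    ENNReal.measurable_ofReal.comp
      ((((hu.sub (hEum.div hE1m)).pow_const 2).mul hE1m))
  -- finiteness of the pieces
  have hfin' := hfin
  rw [splitU] at hfin'
  have hAfin : (∫⁻ q in Ω ×ˢ Ω,
      ENNReal.ofReal (|u q.1 - u q.2| ^ 2 / ‖q.1 - q.2‖ ^ ((n:ℝ) + 2*s))) ≠ ⊤ :=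
    (ENNReal.add_ne_top.mp hfin').1
  have h2J := (ENNReal.add_ne_top.mp hfin').2
  have hJufin : (∫⁻ x in (closure Ω)ᶜ, Jc n s Ω u (u x) x) ≠ ⊤ := by
    intro h
    rw [h, ENNReal.mul_top (by norm_num)] at h2J
    exact h2J rfl
  -- the complement of the closure has positive measure
  have hCne : volume ((closure Ω)ᶜ) ≠ 0 := by
    obtain ⟨r, hr⟩ := (hΩb.closure).subset_closedBall 0
    haveI : Nonempty (Fin n) := ⟨⟨0, hn⟩⟩
    obtain ⟨z, hz⟩ := exists_norm_eq (Rn n) (c := max r 0 + 1) (by positivity)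
    have hzout : z ∈ (closure Ω)ᶜ := by
      intro hmem
      have h1 : dist z 0 ≤ r := hr hmem
      rw [dist_zero_right, hz] at h1
      have := le_max_left r 0
      linarith
    exact ((isClosed_closure.isOpen_compl).measure_pos volume ⟨z, hzout⟩).ne'
  have hρne : volume.restrict ((closure Ω)ᶜ) ≠ 0 := by
    rwa [Ne, Measure.restrict_eq_zero]
  -- u is square integrable on Ω
  have hL2 : IntegrableOn (fun y => u y ^ 2) Ω volume := by
    haveI : (ae (volume.restrict ((closure Ω)ᶜ))).NeBot := ae_neBot.mpr hρne
    have h1 : ∀ᵐ x ∂volume.restrict ((closure Ω)ᶜ), Jc n s Ω u (u x) x < ⊤ :=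
      ae_lt_top measJu hJufin
    have h2 : ∀ᵐ x ∂volume.restrict ((closure Ω)ᶜ), x ∈ (closure Ω)ᶜ := ae_restrict_mem hC
    obtain ⟨x₀, hfin₀, hx₀⟩ := (h1.and h2).exists
    set c : ℝ := u x₀ with hcdef
    -- geometry around x₀
    have hd : 0 < Metric.infDist x₀ Ω := by
      rcases (Metric.infDist_nonneg (s := Ω) (x := x₀)).lt_or_eq with h | h
      · exact h
      · exact absurd ((Metric.mem_closure_iff_infDist_zero hΩne).mpr h.symm) hx₀
    set d := Metric.infDist x₀ Ω with hddef
    obtain ⟨r, hr⟩ := hΩb.subset_closedBall 0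
    set R : ℝ := ‖x₀‖ + r with hRdef
    have hub : ∀ y ∈ Ω, ‖x₀ - y‖ ≤ R := by
      intro y hy
      have h1 : ‖y‖ ≤ r := by simpa [dist_eq_norm] using hr hy
      calc ‖x₀ - y‖ ≤ ‖x₀‖ + ‖y‖ := norm_sub_le _ _
        _ ≤ R := by rw [hRdef]; exact add_le_add_right h1 _
    have hlb : ∀ y ∈ Ω, d ≤ ‖x₀ - y‖ := by
      intro y hy
      simpa [dist_eq_norm] using Metric.infDist_le_dist_of_mem hy
    have hR : 0 < R := by
      obtain ⟨y0, hy0⟩ := hΩne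
      exact lt_of_lt_of_le hd (le_trans (hlb y0 hy0) (hub y0 hy0))
    have hKpos : ∀ y ∈ Ω, 0 < ‖x₀ - y‖ ^ ((n:ℝ) + 2*s) := fun y hy =>
      Real.rpow_pos_of_pos (lt_of_lt_of_le hd (hlb y hy)) _
    have hKub : ∀ y ∈ Ω, ‖x₀ - y‖ ^ ((n:ℝ) + 2*s) ≤ R ^ ((n:ℝ) + 2*s) := fun y hy =>
      Real.rpow_le_rpow (norm_nonneg _) (hub y hy) hp
    -- (c - u y)^2 is integrable on Ω
    have hmeas1 : Measurable fun y : Rn n =>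
        ENNReal.ofReal (|c - u y| ^ 2 / ‖x₀ - y‖ ^ ((n:ℝ) + 2*s)) := by
      apply ENNReal.measurable_ofReal.comp
      refine Measurable.div ?_ ?_
      · exact ((measurable_const.sub hu).abs).pow_const 2
      · exact (((continuous_const.sub continuous_id).norm).rpow_const
          (fun _ => Or.inr hp)).measurable
    have hbound : ∫⁻ y in Ω, ENNReal.ofReal ((c - u y) ^ 2) ∂volume
        ≤ ENNReal.ofReal (R ^ ((n:ℝ) + 2*s)) * Jc n s Ω u c x₀ := by
      rw [Jc, ← lintegral_const_mul _ hmeas1]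
      refine setLIntegral_mono' hΩm ?_
      intro y hy
      rw [← ENNReal.ofReal_mul (Real.rpow_nonneg hR.le _)]
      apply ENNReal.ofReal_le_ofReal
      rw [sq_abs]
      have hK := hKpos y hy
      calc (c - u y) ^ 2 = ‖x₀ - y‖ ^ ((n:ℝ) + 2*s) * ((c - u y) ^ 2 / ‖x₀ - y‖ ^ ((n:ℝ) + 2*s)) := by
            field_simp
        _ ≤ R ^ ((n:ℝ) + 2*s) * ((c - u y) ^ 2 / ‖x₀ - y‖ ^ ((n:ℝ) + 2*s)) := by
            apply mul_le_mul_of_nonneg_right (hKub y hy)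
            positivity
    have hlt : ∫⁻ y in Ω, ENNReal.ofReal ((c - u y) ^ 2) ∂volume < ⊤ :=
      lt_of_le_of_lt hbound (ENNReal.mul_lt_top ENNReal.ofReal_lt_top hfin₀)
    have hcint : IntegrableOn (fun y => (c - u y) ^ 2) Ω volume := by
      refine ⟨((measurable_const.sub hu).pow_const 2).aestronglyMeasurable, ?_⟩
      refine (hasFiniteIntegral_iff_ofReal ?_).mpr hlt
      filter_upwards with y
      positivity
    -- conclude
    have hbd : IntegrableOn (fun y => 2 * (c - u y) ^ 2 + 2 * c ^ 2) Ω volume :=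
      (hcint.const_mul 2).add (integrableOn_const hΩfin.ne)
    refine Integrable.mono' hbd ((hu.pow_const 2).aestronglyMeasurable) ?_
    filter_upwards with y
    rw [Real.norm_eq_abs, abs_of_nonneg (sq_nonneg _)]
    nlinarith [sq_nonneg (u y - 2 * c)]
  -- key decomposition
  have hdec : ∀ᵐ x ∂volume.restrict ((closure Ω)ᶜ),
      Jc n s Ω u (u x) x
        = ENNReal.ofReal ((u x - Efun n s Ω u x / Efun n s Ω (fun _ => 1) x) ^ 2
            * Efun n s Ω (fun _ => 1) x)
          + Jc n s Ω u (tildeFun n s Ω u x) x := by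
    filter_upwards [ae_restrict_mem hC] with x hx
    have hk := keyId hs0 hΩne hΩo hΩb hu hui hL2 hx (u x)
    have hxt : tildeFun n s Ω u x = Efun n s Ω u x / Efun n s Ω (fun _ => 1) x := if_neg hx
    rw [hk.2, hxt]
  have h1 : (∫⁻ x in (closure Ω)ᶜ, Jc n s Ω u (u x) x)
      = (∫⁻ x in (closure Ω)ᶜ, ENNReal.ofReal
          ((u x - Efun n s Ω u x / Efun n s Ω (fun _ => 1) x) ^ 2 * Efun n s Ω (fun _ => 1) x))
        + ∫⁻ x in (closure Ω)ᶜ, Jc n s Ω u (tildeFun n s Ω u x) x := by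
    rw [lintegral_congr_ae hdec]
    exact lintegral_add_left measδ _
  have hJtfin : (∫⁻ x in (closure Ω)ᶜ, Jc n s Ω u (tildeFun n s Ω u x) x) ≠ ⊤ := by
    intro h
    apply hJufin
    rw [h1, h, add_top]
  -- final chain of equivalences
  have hiff1 : gagEnergy n s Ω (tildeFun n s Ω u) = gagEnergy n s Ω u ↔
      (∫⁻ x in (closure Ω)ᶜ, ENNReal.ofReal
        ((u x - Efun n s Ω u x / Efun n s Ω (fun _ => 1) x) ^ 2
          * Efun n s Ω (fun _ => 1) x)) = 0 := by
    rw [splitT, splitU, h1, ENNReal.add_right_inj hAfin, mul_add]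
    constructor
    · intro h
      have h2Jt : 2 * (∫⁻ x in (closure Ω)ᶜ, Jc n s Ω u (tildeFun n s Ω u x) x) ≠ ⊤ :=
        ENNReal.mul_ne_top (by norm_num) hJtfin
      have h' : 2 * (∫⁻ x in (closure Ω)ᶜ, Jc n s Ω u (tildeFun n s Ω u x) x) + 0
          = 2 * (∫⁻ x in (closure Ω)ᶜ, Jc n s Ω u (tildeFun n s Ω u x) x)
            + 2 * (∫⁻ x in (closure Ω)ᶜ, ENNReal.ofReal
              ((u x - Efun n s Ω u x / Efun n s Ω (fun _ => 1) x) ^ 2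
                * Efun n s Ω (fun _ => 1) x)) := by
        rw [add_zero, add_comm]
        exact h
      have h0 := ((ENNReal.add_right_inj h2Jt).mp h').symm
      simpa using h0
    · intro h
      rw [h, mul_zero, zero_add]
  rw [hiff1, lintegral_eq_zero_iff measδ]
  constructor
  · intro h
    filter_upwards [h, ae_restrict_mem hC] with x h0 hx
    have hE1 := (keyId hs0 hΩne hΩo hΩb hu hui hL2 hx (u x)).1
    have hle : (u x - Efun n s Ω u x / Efun n s Ω (fun _ => 1) x) ^ 2
        * Efun n s Ω (fun _ => 1) x ≤ 0 := ENNReal.ofReal_eq_zero.mp h0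
    have h3 : (u x - Efun n s Ω u x / Efun n s Ω (fun _ => 1) x) ^ 2 = 0 := by
      nlinarith [sq_nonneg (u x - Efun n s Ω u x / Efun n s Ω (fun _ => 1) x)]
    have h4 := (pow_eq_zero_iff two_ne_zero).mp h3
    linarith [sub_eq_zero.mp h4]
  · intro h
    filter_upwards [h] with x hx
    simp only [Pi.zero_apply]
    rw [hx, sub_self]
    simp
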